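/- Let s1, s2 be real numbers with 0 ≤ s1 ≤ s2 ≤ 1 and s2 > 0, and set q_crit = (2·s1 − s2)/(s1 + s2). Then for every fixed opponent strategy q ∈ [0,1]: if q < q_crit, the function p ↦ Π(p,q) on [0,1] attains its maximum uniquely at p = 1; if q > q_crit, it attains its maximum uniquely at p = 0; and if q = q_crit, the function p ↦ Π(p,q) is constant on [0,1]. -/

import Mathlib

/-- Expected payoff of a responder playing `p` against a responder playing `q`
in the two-proposer–two-responder Ultimatum Game with offers `s1 ≤ s2`. -/
noncomputable def Pi2 (s1 s2 p q : ℝ) : ℝ :=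
  s1 * p * (1 - q / 2) + s2 * (1 - p) * (1 + q) / 2

theorem stmt0 (s1 s2 : ℝ) (h0 : 0 ≤ s1) (h12 : s1 ≤ s2) (h21 : s2 ≤ 1) (hs2 : 0 < s2)
    (qcrit : ℝ) (hqc : qcrit = (2 * s1 - s2) / (s1 + s2)) :
    ∀ q ∈ Set.Icc (0:ℝ) 1,
      (q < qcrit → ∀ p ∈ Set.Icc (0:ℝ) 1, p ≠ 1 → Pi2 s1 s2 p q < Pi2 s1 s2 1 q) ∧
      (qcrit < q → ∀ p ∈ Set.Icc (0:ℝ) 1, p ≠ 0 → Pi2 s1 s2 p q < Pi2 s1 s2 0 q) ∧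
      (q = qcrit → ∀ p ∈ Set.Icc (0:ℝ) 1, ∀ p' ∈ Set.Icc (0:ℝ) 1,
        Pi2 s1 s2 p q = Pi2 s1 s2 p' q) := by
  have hS : 0 < s1 + s2 := by linarith
  intro q hq
  refine ⟨?_, ?_, ?_⟩
  · intro hlt p hp hne
    have hp1 : p < 1 := lt_of_le_of_ne hp.2 hne
    have hc : q * (s1 + s2) < 2 * s1 - s2 := by
      rw [hqc, lt_div_iff₀ hS] at hlt; linarith
    simp only [Pi2]
    nlinarith [mul_pos (sub_pos.mpr hp1) (sub_pos.mpr hc)]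
  · intro hlt p hp hne
    have hp0 : 0 < p := lt_of_le_of_ne hp.1 (Ne.symm hne)
    have hc : 2 * s1 - s2 < q * (s1 + s2) := by
      rw [hqc, div_lt_iff₀ hS] at hlt; linarith
    simp only [Pi2]
    nlinarith [mul_pos hp0 (sub_pos.mpr hc)]
  · intro heq p _ p' _
    have hc : q * (s1 + s2) = 2 * s1 - s2 := by
      rw [hqc, eq_div_iff hS.ne'] at heq
      exact heq
    simp only [Pi2]
    linear_combination ((p' - p) / 2) * hc
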